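/- Let X and Y be real Banach spaces and A : X → Y a weakly compact bounded linear operator. Let x** ∈ X** and let V be a neighborhood of x** in the w*-topology σ(X**, X*). Then for every ε > 0 there exists x ∈ X whose canonical image j_X(x) lies in V, such that ‖x‖ ≤ ‖x**‖ and ‖j_Y(Ax) − A** x**‖ < ε (norm in Y**). -/

import Mathlib

open Filter Topology Pointwise NormedSpace

noncomputable section

variable {X Y : Type*} [NormedAddCommGroup X] [NormedSpace ℝ X] [CompleteSpace X]
  [NormedAddCommGroup Y] [NormedSpace ℝ Y] [CompleteSpace Y]

/-- The adjoint `A* : Y* → X*` of a bounded linear operator, `(A* g)(x) = g (A x)`. -/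
def opAdjoint (A : X →L[ℝ] Y) : StrongDual ℝ Y →L[ℝ] StrongDual ℝ X :=
  (ContinuousLinearMap.compSL X Y ℝ (RingHom.id ℝ) (RingHom.id ℝ)).flip A

/-- An operator is weakly compact if the image of the closed unit ball is
relatively compact in the weak topology of the codomain. -/
def IsWeaklyCompactOp (A : X →L[ℝ] Y) : Prop :=
  IsCompact (closure (toWeakSpace ℝ Y '' (A '' Metric.closedBall 0 1)))

lemma goldstine_fin {ι : Type*} [Fintype ι] (xss : StrongDual ℝ (StrongDual ℝ X)) (f : ι → StrongDual ℝ X)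
    {δ : ℝ} (hδ : 0 < δ) :
    ∃ x : X, ‖x‖ ≤ ‖xss‖ ∧ ∀ i, |f i x - xss (f i)| < δ := by
  classical
  rcases eq_or_ne xss 0 with rfl | hx0
  · exact ⟨0, le_trans (le_of_eq (norm_zero : ‖(0 : X)‖ = 0)) (ContinuousLinearMap.opNorm_nonneg _), fun i => by simpa using hδ⟩
  set r := ‖xss‖ with hr
  have hrpos : 0 < r := by
    rw [hr]
    rcases (norm_nonneg xss).lt_or_eq with h | h
    · exact h
    · exact absurd (xss.opNorm_zero_iff.mp h.symm) hx0
  set T : X →L[ℝ] (ι → ℝ) := ContinuousLinearMap.pi f with hT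
  set c : ι → ℝ := fun i => xss (f i) with hc
  have hcC : c ∈ closure (T '' Metric.closedBall (0:X) r) := by
    by_contra hcon
    obtain ⟨ℓ, u, hltu, huc⟩ := geometric_hahn_banach_closed_point
      (((convex_closedBall (0:X) r).linear_image T.toLinearMap).closure) isClosed_closure hcon
    set g : StrongDual ℝ X := ∑ i, ℓ (Pi.single i 1) • f i with hg
    have hsingle : ∀ (v : ι → ℝ), ℓ v = ∑ i, v i * ℓ (Pi.single i 1) := by
      intro v
      conv_lhs => rw [← Finset.univ_sum_single v]
      rw [map_sum]
      refine Finset.sum_congr rfl fun i _ => ?_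
      have : (Pi.single i (v i) : ι → ℝ) = v i • (Pi.single i 1 : ι → ℝ) := by
        rw [← Pi.single_smul, smul_eq_mul, mul_one]
      rw [this, map_smul, smul_eq_mul]
    have hgT : ∀ x : X, g x = ℓ (T x) := by
      intro x
      rw [hsingle (T x), hg]
      rw [ContinuousLinearMap.sum_apply]
      refine Finset.sum_congr rfl fun i _ => ?_
      rw [ContinuousLinearMap.smul_apply, smul_eq_mul, mul_comm]
      rfl
    have hball : ∀ x : X, ‖x‖ ≤ r → g x < u := by
      intro x hx
      rw [hgT x]
      exact hltu _ (subset_closure ⟨x, mem_closedBall_zero_iff.mpr hx, rfl⟩)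
    have hu0 : 0 < u := by
      have := hball 0 (by simpa using hrpos.le)
      simpa using this
    have hgnorm : ‖g‖ ≤ u / r := by
      refine ContinuousLinearMap.opNorm_le_bound _ (by positivity) fun x => ?_
      rcases eq_or_ne x 0 with rfl | hxne
      · simp
      · have hxn : (0:ℝ) < ‖x‖ := norm_pos_iff.mpr hxne
        have h1 : g ((r / ‖x‖) • x) < u := by
          refine hball _ ?_
          rw [norm_smul, Real.norm_eq_abs, abs_of_pos (by positivity)]
          rw [div_mul_cancel₀ _ (ne_of_gt hxn)]
        have h2 : g ((r / ‖x‖) • (-x)) < u := by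
          refine hball _ ?_
          rw [norm_smul, Real.norm_eq_abs, abs_of_pos (by positivity), norm_neg]
          rw [div_mul_cancel₀ _ (ne_of_gt hxn)]
        rw [map_smul, smul_eq_mul] at h1
        rw [map_smul, map_neg, smul_eq_mul] at h2
        have habs : (r / ‖x‖) * |g x| ≤ u := by
          rcases abs_cases (g x) with ⟨h, _⟩ | ⟨h, _⟩
          · rw [h]; exact h1.le
          · rw [h]; rw [mul_neg] at h2 ⊢; linarith
        rw [div_mul_eq_mul_div, div_le_iff₀ hxn] at habs
        rw [Real.norm_eq_abs, div_mul_eq_mul_div, le_div_iff₀ hrpos]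
        nlinarith [abs_nonneg (g x)]
    have h2 : xss g = ℓ c := by
      rw [hg, map_sum, hsingle c]
      refine Finset.sum_congr rfl fun i _ => ?_
      rw [map_smul, smul_eq_mul, mul_comm]
    have h1 : xss g ≤ u := by
      calc xss g ≤ |xss g| := le_abs_self _
        _ = ‖xss g‖ := rfl
        _ ≤ ‖xss‖ * ‖g‖ := xss.le_opNorm g
        _ ≤ r * (u / r) := by
            rw [hr]
            exact mul_le_mul_of_nonneg_left hgnorm (norm_nonneg xss)
        _ = u := by field_simp
    rw [h2] at h1
    linarith
  rcases Metric.mem_closure_iff.mp hcC δ hδ with ⟨b, ⟨x, hxball, rfl⟩, hdist⟩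
  refine ⟨x, mem_closedBall_zero_iff.mp hxball, fun i => ?_⟩
  have hi := (dist_le_pi_dist c (T x) i).trans_lt hdist
  rw [Real.dist_eq] at hi
  rw [abs_sub_comm]
  simpa [hT, hc] using hi

lemma weakDual_nhds {E : Type*} [NormedAddCommGroup E] [NormedSpace ℝ E]
    {z : StrongDual ℝ E} {s : Set (WeakDual ℝ E)} (hs : s ∈ 𝓝 (StrongDual.toWeakDual z)) :
    ∃ (I : Finset E) (δ : ℝ), 0 < δ ∧
      ∀ w : StrongDual ℝ E, (∀ e ∈ I, |w e - z e| < δ) → StrongDual.toWeakDual w ∈ s := by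
  classical
  set B := topDualPairing ℝ E with hB
  have hemb := (WeakBilin.isEmbedding (B := B) ContinuousLinearMap.coe_injective).toIsInducing
  replace hs := (hemb.nhds_eq_comap (StrongDual.toWeakDual z)).ge hs
  rcases Filter.mem_comap.mp hs with ⟨t, ht, hts⟩
  rw [nhds_pi] at ht
  rcases Filter.mem_pi.mp ht with ⟨I0, hI0, t', ht', hsub⟩
  have key : ∀ e : E, ∃ d : ℝ, 0 < d ∧
      (e ∈ I0 → Metric.ball (B (StrongDual.toWeakDual z) e) d ⊆ t' e) := by
    intro e
    by_cases he : e ∈ I0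
    · rcases Metric.mem_nhds_iff.mp (ht' e) with ⟨d, hd, hball⟩
      exact ⟨d, hd, fun _ => hball⟩
    · exact ⟨1, one_pos, fun h => absurd h he⟩
  choose d hd0 hdball using key
  set I : Finset E := hI0.toFinset with hI
  by_cases hne : I.Nonempty
  · refine ⟨I, I.inf' hne d, ?_, ?_⟩
    · rw [Finset.lt_inf'_iff]
      exact fun e _ => hd0 e
    · intro w hw
      apply hts
      apply hsub
      intro e he
      have heI : e ∈ I := by rw [hI]; exact hI0.mem_toFinset.mpr he
      refine hdball e he ?_
      rw [Metric.mem_ball, Real.dist_eq]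
      exact lt_of_lt_of_le (hw e heI) (Finset.inf'_le d heI)
  · refine ⟨I, 1, one_pos, ?_⟩
    intro w _
    apply hts
    apply hsub
    intro e he
    exact absurd (by rw [hI] at hne; exact hne ⟨e, hI0.mem_toFinset.mpr he⟩) (not_false)

/-- Proposition 5.1 of the paper: if `A` is weakly compact,
`x** ∈ X**` and `V` is a `σ(X**, X*)`-neighborhood of `x**`, then for every `ε > 0`
there is `x ∈ X` with `j_X x ∈ V`, `‖x‖ ≤ ‖x**‖` and `‖j_Y (A x) − A** x**‖ < ε`. -/
theorem statement1 (A : X →L[ℝ] Y) (hA : IsWeaklyCompactOp A)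
    (xss : StrongDual ℝ (StrongDual ℝ X)) (V : Set (StrongDual ℝ (StrongDual ℝ X)))
    (hV : StrongDual.toWeakDual '' V ∈ 𝓝 (StrongDual.toWeakDual xss)) :
    ∀ ε : ℝ, 0 < ε → ∃ x : X, inclusionInDoubleDual ℝ X x ∈ V ∧ ‖x‖ ≤ ‖xss‖ ∧
      ‖inclusionInDoubleDual ℝ Y (A x) - xss.comp (opAdjoint A)‖ < ε := by
  intro ε hε
  classical
  have hVmem : xss ∈ V := by
    rcases mem_of_mem_nhds hV with ⟨v, hv, hveq⟩
    rwa [StrongDual.toWeakDual.injective hveq] at hv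
  rcases eq_or_ne xss 0 with rfl | hx0
  · refine ⟨0, by simpa using hVmem, le_trans (le_of_eq (norm_zero : ‖(0 : X)‖ = 0)) (ContinuousLinearMap.opNorm_nonneg _), ?_⟩
    simpa [map_zero, ContinuousLinearMap.zero_comp, ContinuousLinearMap.opNorm_zero] using hε
  have hr : (0:ℝ) < ‖xss‖ := by
    rcases (norm_nonneg xss).lt_or_eq with h | h
    · exact h
    · exact absurd (xss.opNorm_zero_iff.mp h.symm) hx0
  obtain ⟨I, δ, hδ, hIV⟩ := weakDual_nhds hV
  set S : Set X := {x | ‖x‖ ≤ ‖xss‖ ∧ ∀ e ∈ I, |e x - xss e| < δ} with hSdef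
  have hSV : ∀ x ∈ S, inclusionInDoubleDual ℝ X x ∈ V := by
    intro x hx
    have hmem := hIV (inclusionInDoubleDual ℝ X x) (fun e he => by
      simpa [NormedSpace.dual_def] using hx.2 e he)
    rcases hmem with ⟨v, hv, hveq⟩
    rwa [← StrongDual.toWeakDual.injective hveq]
  have hSconv : Convex ℝ S := by
    have heq : S = Metric.closedBall (0:X) ‖xss‖ ∩ ⋂ e ∈ I, (e : X →ₗ[ℝ] ℝ) ⁻¹' Metric.ball (xss e) δ := by
      ext x
      simp [hSdef, mem_closedBall_zero_iff, Metric.mem_ball, Real.dist_eq, Set.mem_iInter]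
    rw [heq]
    exact (convex_closedBall _ _).inter (convex_iInter fun e => convex_iInter fun _ =>
      (convex_ball _ _).linear_preimage (e : X →ₗ[ℝ] ℝ))
  have hAS : Convex ℝ ((A : X →ₗ[ℝ] Y) '' S) := hSconv.linear_image _
  -- compactness of the weak closure of A '' S
  haveI : ContinuousSMul ℝ (WeakSpace ℝ Y) := WeakBilin.instContinuousSMul _
  set m : WeakSpace ℝ Y ≃ₜ WeakSpace ℝ Y := Homeomorph.smulOfNeZero (‖xss‖) hr.ne' with hmdef
  have hsub : toWeakSpace ℝ Y '' (A '' S) ⊆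
      m '' (toWeakSpace ℝ Y '' (A '' Metric.closedBall 0 1)) := by
    rintro _ ⟨_, ⟨x, hxS, rfl⟩, rfl⟩
    refine ⟨toWeakSpace ℝ Y (A (‖xss‖⁻¹ • x)), ⟨A (‖xss‖⁻¹ • x), ⟨‖xss‖⁻¹ • x, ?_, rfl⟩, rfl⟩, ?_⟩
    · rw [Metric.mem_closedBall, dist_zero_right, norm_smul, Real.norm_eq_abs,
        abs_of_pos (by positivity)]
      rw [inv_mul_le_iff₀ hr, mul_one]
      exact hxS.1
    · show (Units.mk0 ‖xss‖ hr.ne') • (toWeakSpace ℝ Y (A (‖xss‖⁻¹ • x)))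
          = toWeakSpace ℝ Y (A x)
      rw [Units.smul_mk0, ← map_smul, ← map_smul, smul_inv_smul₀ hr.ne']
  have hKsub : closure (toWeakSpace ℝ Y '' (A '' S)) ⊆
      m '' closure (toWeakSpace ℝ Y '' (A '' Metric.closedBall 0 1)) := by
    refine closure_minimal (hsub.trans (Set.image_mono subset_closure)) ?_
    exact (m.isClosedMap _ isClosed_closure)
  have hKcomp : IsCompact (closure (toWeakSpace ℝ Y '' (A '' S))) :=
    (hA.image m.continuous).of_isClosed_subset isClosed_closure hKsub
  -- the map into the bidual with w* topology
  set φ : WeakSpace ℝ Y → WeakDual ℝ (StrongDual ℝ Y) := fun w =>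
    StrongDual.toWeakDual (inclusionInDoubleDual ℝ Y ((toWeakSpace ℝ Y).symm w)) with hφdef
  have hφcont : Continuous φ := by
    apply WeakBilin.continuous_of_continuous_eval
    intro h
    exact WeakBilin.eval_continuous ((topDualPairing ℝ Y).flip) h
  have hmem : StrongDual.toWeakDual (xss.comp (opAdjoint A)) ∈
      closure (φ '' (toWeakSpace ℝ Y '' (A '' S))) := by
    rw [mem_closure_iff_nhds]
    intro t ht
    obtain ⟨J, η, hη, hJ⟩ := weakDual_nhds (z := xss.comp (opAdjoint A)) ht
    set F : Finset (StrongDual ℝ X) := I ∪ J.image (opAdjoint A) with hF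
    obtain ⟨x, hxnorm, hxF⟩ := goldstine_fin xss (fun e : F => (e : StrongDual ℝ X))
      (δ := min δ η) (lt_min hδ hη)
    have hxS : x ∈ S := by
      refine ⟨hxnorm, fun e he => ?_⟩
      exact lt_of_lt_of_le (hxF ⟨e, Finset.mem_union_left _ he⟩) (min_le_left _ _)
    refine ⟨φ (toWeakSpace ℝ Y (A x)), ?_,
      Set.mem_image_of_mem φ (Set.mem_image_of_mem _ (Set.mem_image_of_mem A hxS))⟩
    show StrongDual.toWeakDual (inclusionInDoubleDual ℝ Y (A x)) ∈ t
    apply hJ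
    intro h hh
    have hmemF : (opAdjoint A) h ∈ F := Finset.mem_union_right _ (Finset.mem_image_of_mem _ hh)
    have hb := hxF ⟨_, hmemF⟩
    have : |(opAdjoint A h) x - xss (opAdjoint A h)| < η :=
      lt_of_lt_of_le hb (min_le_right _ _)
    simpa [NormedSpace.dual_def] using (show |h (A x) - xss (opAdjoint A h)| < η from this)
  have hclosed : IsClosed (φ '' closure (toWeakSpace ℝ Y '' (A '' S))) :=
    (hKcomp.image hφcont).isClosed
  have hmem2 : StrongDual.toWeakDual (xss.comp (opAdjoint A)) ∈
      φ '' closure (toWeakSpace ℝ Y '' (A '' S)) :=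
    closure_minimal (Set.image_mono subset_closure) hclosed hmem
  obtain ⟨yw, hywK, hyweq⟩ := hmem2
  have hASc : toWeakSpace ℝ Y '' ((A : X →ₗ[ℝ] Y) '' S) = toWeakSpace ℝ Y '' (A '' S) := rfl
  rw [← hASc, ← hAS.toWeakSpace_closure (𝕜 := ℝ)] at hywK
  obtain ⟨y, hyclos, rfl⟩ := hywK
  have hjy : inclusionInDoubleDual ℝ Y y = xss.comp (opAdjoint A) := by
    apply StrongDual.toWeakDual.injective
    exact hyweq
  obtain ⟨b, ⟨x, hxS, rfl⟩, hby⟩ := Metric.mem_closure_iff.mp hyclos ε hε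
  refine ⟨x, hSV x hxS, hxS.1, ?_⟩
  rw [← hjy, ← map_sub]
  have hnorm : ‖inclusionInDoubleDual ℝ Y (A x - y)‖ = ‖A x - y‖ :=
    (inclusionInDoubleDualLi ℝ).norm_map _
  rw [hnorm, ← dist_eq_norm, dist_comm]
  exact hby
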